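/- Let L be a symmetric positive semi-definite n×n stress matrix partitioned as [[L_ll, L_lf],[L_fl, L_ff]] with L_ff positive definite, satisfying (L ⊗ I_d) r = 0. Suppose leader trajectories satisfy p_l(t) = (I ⊗ A(t)) r_l + 1_{n_l} ⊗ b(t) and define p_f*(t) = -(L_ff ⊗ I_d)^{-1}(L_fl ⊗ I_d) p_l(t). Then p_f*(t) = (I ⊗ A(t)) r_f + 1_{n_f} ⊗ b(t), i.e., the stress-matrix formula reproduces the affine image of the follower configuration. -/

import Mathlib

open Matrix

/-- Let the positive semidefinite symmetric stress matrix
`L = [[Lll, Llf],[Lfl, Lff]]` have `Lff` positive definite, zero row sums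
(`L 1_n = 0`), and satisfy `(L ⊗ I_d) r = 0` (encoded blockwise as
`L * [Rl; Rf] = 0` with the rows of `Rl, Rf` the configuration points).
If each leader position is the affine image `p_i = A r_i + b` (rows of `Pl`)
and `Pf* := -(Lff⁻¹ Lfl) Pl`, then each row of `Pf*` is `A r_i + b` for the
corresponding follower configuration point, i.e. the stress-matrix formula
reproduces the affine image of the follower configuration. -/
theorem stmt19 {nl nf d : ℕ}
    (Lll : Matrix (Fin nl) (Fin nl) ℝ) (Llf : Matrix (Fin nl) (Fin nf) ℝ)
    (Lfl : Matrix (Fin nf) (Fin nl) ℝ) (Lff : Matrix (Fin nf) (Fin nf) ℝ)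
    (hpsd : (Matrix.fromBlocks Lll Llf Lfl Lff).PosSemidef)
    (hff : Lff.PosDef)
    (hrow : (Matrix.fromBlocks Lll Llf Lfl Lff) *ᵥ (fun _ => (1 : ℝ)) = 0)
    (Rl : Matrix (Fin nl) (Fin d) ℝ) (Rf : Matrix (Fin nf) (Fin d) ℝ)
    (hker : Matrix.fromBlocks Lll Llf Lfl Lff * Matrix.fromRows Rl Rf = 0)
    (A : Matrix (Fin d) (Fin d) ℝ) (b : Fin d → ℝ)
    (Pl : Matrix (Fin nl) (Fin d) ℝ)
    (hPl : ∀ i, Pl i = A.mulVec (Rl i) + b) :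
    ∀ i, (-(Lff⁻¹ * Lfl * Pl)) i = A.mulVec (Rf i) + b := by
  have hdet : IsUnit Lff.det := isUnit_iff_ne_zero.2 (ne_of_gt hff.det_pos)
  have h1 : Lfl * Rl + Lff * Rf = 0 := by
    ext i j
    have := congrFun (congrFun hker (Sum.inr i)) j
    simpa [Matrix.mul_apply, Matrix.fromBlocks,
      Fintype.sum_sum_type, Matrix.add_apply, Matrix.fromRows_apply_inl,
      Matrix.fromRows_apply_inr] using this
  have hRf : Lff⁻¹ * Lfl * Rl = -Rf := by
    have h2 : Lff * Rf = -(Lfl * Rl) :=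
      eq_neg_of_add_eq_zero_left (by rwa [add_comm] at h1)
    calc Lff⁻¹ * Lfl * Rl = Lff⁻¹ * (Lfl * Rl) := by rw [Matrix.mul_assoc]
      _ = Lff⁻¹ * -(Lff * Rf) := by rw [h2, neg_neg]
      _ = -(Lff⁻¹ * Lff * Rf) := by rw [Matrix.mul_neg, Matrix.mul_assoc]
      _ = -Rf := by rw [Matrix.nonsing_inv_mul _ hdet, Matrix.one_mul]
  have fact1 : ∀ i m, (∑ k, (Lff⁻¹ * Lfl) i k * Rl k m) = -Rf i m := by
    intro i m
    have := congrFun (congrFun hRf i) m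
    simpa [Matrix.mul_apply] using this
  have h3 : ∀ i, (Lfl *ᵥ (fun _ => (1:ℝ))) i + (Lff *ᵥ (fun _ => (1:ℝ))) i = 0 := by
    intro i
    have := congrFun hrow (Sum.inr i)
    simpa [Matrix.mulVec, dotProduct, Matrix.fromBlocks,
      Fintype.sum_sum_type] using this
  have h4 : Lfl *ᵥ (fun _ => (1:ℝ)) = -(Lff *ᵥ (fun _ => (1:ℝ))) := by
    funext i
    have := h3 i
    simp only [Pi.neg_apply]
    linarith
  have fact2 : ∀ i, (∑ k, (Lff⁻¹ * Lfl) i k) = -1 := by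
    intro i
    have h5 : (Lff⁻¹ * Lfl) *ᵥ (fun _ => (1:ℝ)) = -(fun _ => (1:ℝ)) := by
      rw [← Matrix.mulVec_mulVec, h4]
      rw [Matrix.mulVec_neg, Matrix.mulVec_mulVec, Matrix.nonsing_inv_mul _ hdet,
        Matrix.one_mulVec]
    have := congrFun h5 i
    simpa [Matrix.mulVec, dotProduct] using this
  intro i
  funext j
  have expand : (-(Lff⁻¹ * Lfl * Pl)) i j
      = -∑ k, (Lff⁻¹ * Lfl) i k * ((∑ m, A j m * Rl k m) + b j) := by
    simp [Matrix.mul_apply, hPl, Matrix.mulVec, dotProduct]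
  rw [expand]
  have swap : (∑ k, (Lff⁻¹ * Lfl) i k * (∑ m, A j m * Rl k m))
      = ∑ m, A j m * (∑ k, (Lff⁻¹ * Lfl) i k * Rl k m) := by
    simp_rw [Finset.mul_sum]
    rw [Finset.sum_comm]
    exact Finset.sum_congr rfl fun m _ => Finset.sum_congr rfl fun k _ => by ring
  simp_rw [mul_add]
  rw [Finset.sum_add_distrib, swap]
  simp_rw [fact1]
  rw [← Finset.sum_mul, fact2]
  simp [Matrix.mulVec, dotProduct]
  ring
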